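/- For an integer budget Γ with 0 ≤ Γ ≤ n and real numbers t_1,…,t_n, the minimum of ∑_i t_i ξ_i over all ξ ∈ ℝ^n with |ξ_i| ≤ 1 for all i and ∑_i |ξ_i| ≤ Γ equals the negative of the sum of the Γ largest values among |t_1|,…,|t_n|. -/
import Mathlib


/-- Sum of the `Γ` largest values among `|t 1|, …, |t n|`:
the supremum over all subsets of cardinality `Γ` of the sum of `|t i|`. -/
noncomputable def sumTopAbs (n : ℕ) (t : Fin n → ℝ) (Γ : ℕ) : ℝ :=
  sSup {x : ℝ | ∃ S : Finset (Fin n), S.card = Γ ∧ x = ∑ i ∈ S, |t i|}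

theorem stmt0 (n : ℕ) (hn : 1 ≤ n) (Γ : ℕ) (hΓ : Γ ≤ n) (t : Fin n → ℝ) :
    IsLeast {y : ℝ | ∃ ξ : Fin n → ℝ, (∀ i, |ξ i| ≤ 1) ∧ (∑ i, |ξ i|) ≤ (Γ : ℝ) ∧
        y = ∑ i, t i * ξ i}
      (-(sumTopAbs n t Γ)) := by
  classical
  set A := {x : ℝ | ∃ S : Finset (Fin n), S.card = Γ ∧ x = ∑ i ∈ S, |t i|} with hA
  have hfin : A.Finite := by
    apply Set.Finite.subset (Finset.finite_toSet ((Finset.univ.powersetCard Γ).image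
      (fun S => ∑ i ∈ S, |t i|)))
    rintro x ⟨S, hS, rfl⟩
    simp only [Finset.coe_image, Set.mem_image, Finset.mem_coe, Finset.mem_powersetCard]
    exact ⟨S, ⟨Finset.subset_univ S, hS⟩, rfl⟩
  have hcardn : Γ ≤ (Finset.univ : Finset (Fin n)).card := by
    simpa using hΓ
  obtain ⟨S1, hS1sub, hS1card⟩ := Finset.exists_subset_card_eq hcardn
  have hne : A.Nonempty := ⟨_, S1, hS1card, rfl⟩
  have hsup : sumTopAbs n t Γ = sSup A := rfl
  obtain ⟨S₀, hS₀card, hS₀eq⟩ := hne.csSup_mem hfin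
  have hval : sumTopAbs n t Γ = ∑ i ∈ S₀, |t i| := hsup.trans hS₀eq
  have hub : ∀ S : Finset (Fin n), S.card = Γ → ∑ i ∈ S, |t i| ≤ sumTopAbs n t Γ := by
    intro S hS
    rw [hsup]
    exact le_csSup hfin.bddAbove ⟨S, hS, rfl⟩
  constructor
  · refine ⟨fun i => if i ∈ S₀ then (if 0 ≤ t i then (-1 : ℝ) else 1) else 0, ?_, ?_, ?_⟩
    · intro i
      by_cases h : i ∈ S₀ <;> by_cases h2 : 0 ≤ t i <;> simp [h, h2]
    · have habs : ∀ i : Fin n,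
          |if i ∈ S₀ then (if 0 ≤ t i then (-1 : ℝ) else 1) else 0|
            = if i ∈ S₀ then 1 else 0 := by
        intro i
        by_cases h : i ∈ S₀ <;> by_cases h2 : 0 ≤ t i <;> simp [h, h2]
      rw [Finset.sum_congr rfl fun i _ => habs i]
      rw [Finset.sum_ite_mem, Finset.univ_inter, Finset.sum_const, hS₀card]
      simp
    · have hmul : ∀ i : Fin n,
          t i * (if i ∈ S₀ then (if 0 ≤ t i then (-1 : ℝ) else 1) else 0)
            = if i ∈ S₀ then -|t i| else 0 := by
        intro i
        by_cases h : i ∈ S₀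
        · by_cases h2 : 0 ≤ t i
          · rw [if_pos h, if_pos h2, if_pos h, abs_of_nonneg h2]; ring
          · rw [if_pos h, if_neg h2, if_pos h, abs_of_neg (not_le.mp h2)]; ring
        · simp [h]
      rw [Finset.sum_congr rfl fun i _ => hmul i, Finset.sum_ite_mem, Finset.univ_inter,
        Finset.sum_neg_distrib, hval]
  · rintro y ⟨ξ, hb, hs, rfl⟩
    have h1 : ∑ i, -(|t i| * |ξ i|) ≤ ∑ i, t i * ξ i :=
      Finset.sum_le_sum fun i _ => by rw [← abs_mul]; exact neg_abs_le _
    rw [Finset.sum_neg_distrib] at h1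
    have key : ∑ i, |t i| * |ξ i| ≤ sumTopAbs n t Γ := by
      rcases Nat.eq_zero_or_pos Γ with hΓ0 | hΓpos
      · have hsum0 : ∑ i, |ξ i| = 0 := by
          apply le_antisymm
          · simpa [hΓ0] using hs
          · exact Finset.sum_nonneg fun i _ => abs_nonneg _
        have hz : ∀ i ∈ Finset.univ, |ξ i| = (0 : ℝ) :=
          (Finset.sum_eq_zero_iff_of_nonneg fun i _ => abs_nonneg _).mp hsum0
        have : ∑ i, |t i| * |ξ i| = 0 := Finset.sum_eq_zero fun i hi => by
          rw [hz i hi, mul_zero]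
        rw [this, hval]
        exact Finset.sum_nonneg fun i _ => abs_nonneg _
      · have hS₀ne : S₀.Nonempty := Finset.card_pos.mp (hS₀card ▸ hΓpos)
        set τ := S₀.inf' hS₀ne (fun i => |t i|) with hτ
        obtain ⟨i0, hi0S, hi0⟩ := Finset.exists_mem_eq_inf' hS₀ne (fun i => |t i|)
        have hτ0 : 0 ≤ τ := by rw [hτ, hi0]; exact abs_nonneg _
        have hτle : ∀ i ∈ S₀, τ ≤ |t i| := fun i hi => Finset.inf'_le _ hi
        have hout : ∀ j, j ∉ S₀ → |t j| ≤ τ := by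
          intro j hj
          have hjne : j ∉ S₀.erase i0 := fun h => hj (Finset.mem_of_mem_erase h)
          have hcard : (insert j (S₀.erase i0)).card = Γ := by
            rw [Finset.card_insert_of_notMem hjne, Finset.card_erase_of_mem hi0S, hS₀card]
            omega
          have hsum := hub _ hcard
          rw [Finset.sum_insert hjne, hval] at hsum
          have hsplit0 : ∑ i ∈ S₀, |t i| = |t i0| + ∑ i ∈ S₀.erase i0, |t i| :=
            (Finset.add_sum_erase _ _ hi0S).symm
          rw [hτ, hi0]
          rw [hsplit0] at hsum
          linarith
        have hsplit : ∑ i ∈ S₀, |t i| * |ξ i| + ∑ i ∈ S₀ᶜ, |t i| * |ξ i|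
            = ∑ i, |t i| * |ξ i| := Finset.sum_add_sum_compl S₀ _
        have h2 : ∑ i ∈ S₀, |t i| * |ξ i| ≤ ∑ i ∈ S₀, ((|t i| - τ) + τ * |ξ i|) :=
          Finset.sum_le_sum fun i hi => by nlinarith [abs_nonneg (ξ i), hb i, hτle i hi]
        have h3 : ∑ i ∈ S₀ᶜ, |t i| * |ξ i| ≤ τ * ∑ i ∈ S₀ᶜ, |ξ i| := by
          rw [Finset.mul_sum]
          exact Finset.sum_le_sum fun i hi =>
            mul_le_mul_of_nonneg_right (hout i (Finset.mem_compl.mp hi)) (abs_nonneg _)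
        have h4 : ∑ i ∈ S₀, ((|t i| - τ) + τ * |ξ i|)
            = (∑ i ∈ S₀, |t i|) - τ * Γ + τ * ∑ i ∈ S₀, |ξ i| := by
          rw [Finset.sum_add_distrib, Finset.sum_sub_distrib, Finset.sum_const, hS₀card,
            ← Finset.mul_sum, nsmul_eq_mul]
          ring
        have h5 : ∑ i ∈ S₀, |ξ i| + ∑ i ∈ S₀ᶜ, |ξ i| = ∑ i, |ξ i| :=
          Finset.sum_add_sum_compl S₀ _
        have h5' : τ * ∑ i ∈ S₀, |ξ i| + τ * ∑ i ∈ S₀ᶜ, |ξ i| = τ * ∑ i, |ξ i| := by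
          rw [← mul_add, h5]
        have h6 : τ * ∑ i, |ξ i| ≤ τ * Γ := mul_le_mul_of_nonneg_left hs hτ0
        rw [hval]
        linarith
    linarith
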